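/- Let (H, μ) be a probability space with measurable maps π_L, π_R : H → H such that (π_L, π_R) pushes μ forward to μ × μ. Then any map φ : H → H of the form φ(σ) = c(p₁(σ), ..., pₙ(σ)) where p₁,...,pₙ are distinct compositions of π_L and π_R forming a non-duplicating sequence of paths (no path is a suffix of another), and c reassembles them via a measure-preserving pairing, is measure-preserving: ∫ g(φ(σ)) dμ(σ) = ∫ g(σ) dμ(σ) for all measurable g : H → [0,∞]. -/

import Mathlib

open MeasureTheory

namespace EntropyShuffle

variable {H : Type*}

/-- A path is a list of directions (`true` = L, `false` = R), interpreted as a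
composition of projections: `[d₁, …, dₙ](σ) = (π_{d₁} ∘ ⋯ ∘ π_{dₙ})(σ)`. -/
def pathEval (πL πR : H → H) : List Bool → H → H
  | [], σ => σ
  | d :: p, σ => (if d then πL else πR) (pathEval πL πR p σ)

/-- Finite shuffling functions: either a path, or a pairing of two FSFs. -/
inductive FSF where
  | path : List Bool → FSF
  | pair : FSF → FSF → FSF

/-- Evaluation of an FSF, given projections and a pairing function `c`. -/
def FSF.eval (πL πR : H → H) (c : H → H → H) : FSF → H → H
  | .path p, σ => pathEval πL πR p σ
  | .pair f g, σ => c (f.eval πL πR c σ) (g.eval πL πR c σ)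

/-- The sequence of paths appearing in an FSF. -/
def FSF.paths : FSF → List (List Bool)
  | .path p => [p]
  | .pair f g => f.paths ++ g.paths

/-- An FSF is non-duplicating if no path in its sequence of paths is a
suffix of another. -/
def FSF.NonDuplicating (φ : FSF) : Prop :=
  List.Pairwise (fun p q => ¬ p <:+ q ∧ ¬ q <:+ p) φ.paths

section Aux

variable (πL πR : H → H) (c : H → H → H)

/-- chain evaluation: `c (p₁ σ) (c (p₂ σ) (⋯))`. -/
def chainEval : List (List Bool) → H → H
  | [], σ => σ
  | [p], σ => pathEval πL πR p σ
  | p :: q :: l, σ => c (pathEval πL πR p σ) (chainEval (q :: l) σ)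

def takeP : ℕ → H → H
  | 0, v => v
  | 1, v => πL v
  | (k+2), v => c (πL v) (takeP (k+1) (πR v))

def dropP : ℕ → H → H
  | 0, v => v
  | (k+1), v => dropP k (πR v)

def psi : ℕ → H → H → H
  | 0, a, _ => a
  | 1, a, b => c a b
  | (k+2), a, b => c (πL a) (psi (k+1) (πR a) b)

def Phi : FSF → H → H
  | .path _, v => v
  | .pair f g, v =>
      c (Phi f (takeP πL πR c f.paths.length v)) (Phi g (dropP πR f.paths.length v))

def theta : List Bool → H → H → H
  | [], a, _ => a
  | (true :: ds), a, b =>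
      if false ∈ ds then
        (if true ∈ ds then c (πL a) (theta ds (πR a) b) else c a b)
      else a
  | (false :: ds), a, b =>
      if true ∈ ds then
        (if false ∈ ds then c (πL b) (theta ds a (πR b)) else c b a)
      else b

end Aux

def lastD (p : List Bool) : Bool := p.getLastD true
def dsL (l : List (List Bool)) : List Bool := l.map lastD
def lxL (l : List (List Bool)) : List (List Bool) :=
  (l.filter fun p => lastD p).map List.dropLast
def lyL (l : List (List Bool)) : List (List Bool) :=
  (l.filter fun p => !(lastD p)).map List.dropLast

/-! ### pure list lemmas -/

lemma dropLast_concat_lastD : ∀ (p : List Bool), p ≠ [] → p.dropLast ++ [lastD p] = p := by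
  intro p hp
  conv_rhs => rw [← List.dropLast_append_getLast hp]
  congr 1
  simp [lastD, List.getLastD_eq_getLast?, List.getLast?_eq_getLast hp]

lemma pathEval_append (πL πR : H → H) (a b : List Bool) (σ : H) :
    pathEval πL πR (a ++ b) σ = pathEval πL πR a (pathEval πL πR b σ) := by
  induction a with
  | nil => rfl
  | cons d p ih => simp [pathEval, ih]

lemma pathEval_strip (πL πR : H → H) (p : List Bool) (hp : p ≠ []) (σ : H) :
    pathEval πL πR p σ
      = pathEval πL πR p.dropLast ((if lastD p then πL else πR) σ) := by
  conv_lhs => rw [← dropLast_concat_lastD p hp]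
  rw [pathEval_append]
  rfl

lemma chainEval_cons (πL πR : H → H) (c : H → H → H) (p : List Bool)
    {l : List (List Bool)} (hl : l ≠ []) (σ : H) :
    chainEval πL πR c (p :: l) σ
      = c (pathEval πL πR p σ) (chainEval πL πR c l σ) := by
  cases l with
  | nil => exact absurd rfl hl
  | cons q r => rfl

lemma lxL_cons_pos {p : List Bool} (hb : lastD p = true) (l : List (List Bool)) :
    lxL (p :: l) = p.dropLast :: lxL l := by
  simp [lxL, List.filter_cons, hb]

lemma lxL_cons_neg {p : List Bool} (hb : lastD p = false) (l : List (List Bool)) :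
    lxL (p :: l) = lxL l := by
  simp [lxL, List.filter_cons, hb]

lemma lyL_cons_pos {p : List Bool} (hb : lastD p = false) (l : List (List Bool)) :
    lyL (p :: l) = p.dropLast :: lyL l := by
  simp [lyL, List.filter_cons, hb]

lemma lyL_cons_neg {p : List Bool} (hb : lastD p = true) (l : List (List Bool)) :
    lyL (p :: l) = lyL l := by
  simp [lyL, List.filter_cons, hb]

lemma mem_dsL_true {l : List (List Bool)} (h : true ∈ dsL l) : lxL l ≠ [] := by
  rcases List.mem_map.1 h with ⟨p, hp, hlast⟩
  have : p.dropLast ∈ lxL l :=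
    List.mem_map.2 ⟨p, List.mem_filter.2 ⟨hp, by simp [hlast]⟩, rfl⟩
  exact List.ne_nil_of_mem this

lemma mem_dsL_false {l : List (List Bool)} (h : false ∈ dsL l) : lyL l ≠ [] := by
  rcases List.mem_map.1 h with ⟨p, hp, hlast⟩
  have : p.dropLast ∈ lyL l :=
    List.mem_map.2 ⟨p, List.mem_filter.2 ⟨hp, by simp [← hlast]⟩, rfl⟩
  exact List.ne_nil_of_mem this

lemma not_mem_dsL_true {l : List (List Bool)} (h : true ∉ dsL l) : lxL l = [] := by
  rw [lxL, List.map_eq_nil_iff, List.filter_eq_nil_iff]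
  intro p hp
  simp only [Bool.not_eq_true]
  by_contra hcon
  exact h (List.mem_map.2 ⟨p, hp, by simpa using hcon⟩)

lemma not_mem_dsL_false {l : List (List Bool)} (h : false ∉ dsL l) : lyL l = [] := by
  rw [lyL, List.map_eq_nil_iff, List.filter_eq_nil_iff]
  intro p hp
  simp only [Bool.not_eq_true, Bool.not_eq_false]
  by_contra hcon
  exact h (List.mem_map.2 ⟨p, hp, by simpa using hcon⟩)

lemma dsL_mem_or {l : List (List Bool)} (hl : l ≠ []) :
    true ∈ dsL l ∨ false ∈ dsL l := by
  cases l with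
  | nil => exact absurd rfl hl
  | cons p r =>
    cases h : lastD p
    · right; exact List.mem_map.2 ⟨p, List.mem_cons_self, h⟩
    · left; exact List.mem_map.2 ⟨p, List.mem_cons_self, h⟩

lemma all_ne_nil {p q : List Bool} {r : List (List Bool)}
    (h : List.Pairwise (fun p q => ¬ p <:+ q ∧ ¬ q <:+ p) (p :: q :: r)) :
    ∀ x ∈ p :: q :: r, x ≠ [] := by
  rcases List.pairwise_cons.1 h with ⟨hpq, _⟩
  intro x hx hxnil
  subst hxnil
  rcases List.mem_cons.1 hx with rfl | hx
  · exact (hpq q (List.mem_cons_self)).1 ((q).nil_suffix)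
  · exact (hpq [] hx).2 ((p).nil_suffix)

lemma suffix_of_dropLast {a b : List Bool} (ha : a ≠ []) (hb : b ≠ [])
    (hl : lastD a = lastD b) (h : a.dropLast <:+ b.dropLast) : a <:+ b := by
  rcases h with ⟨t, ht⟩
  refine ⟨t, ?_⟩
  have : t ++ a.dropLast ++ [lastD a] = b.dropLast ++ [lastD b] := by rw [ht, hl]
  rw [← dropLast_concat_lastD a ha, ← dropLast_concat_lastD b hb, ← List.append_assoc]
  exact this

lemma pairwise_lxL {l : List (List Bool)} (hne : ∀ p ∈ l, p ≠ [])
    (h : List.Pairwise (fun p q => ¬ p <:+ q ∧ ¬ q <:+ p) l) :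
    List.Pairwise (fun p q => ¬ p <:+ q ∧ ¬ q <:+ p) (lxL l) := by
  rw [lxL, List.pairwise_map]
  refine List.Pairwise.imp_of_mem ?_ (h.filter _)
  intro a b ha hb hab
  rcases List.mem_filter.1 ha with ⟨ha', hal⟩
  rcases List.mem_filter.1 hb with ⟨hb', hbl⟩
  have hlast : lastD a = lastD b := by
    rw [hal, hbl]
  constructor
  · intro hs; exact hab.1 (suffix_of_dropLast (hne a ha') (hne b hb') hlast hs)
  · intro hs; exact hab.2 (suffix_of_dropLast (hne b hb') (hne a ha') hlast.symm hs)

lemma pairwise_lyL {l : List (List Bool)} (hne : ∀ p ∈ l, p ≠ [])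
    (h : List.Pairwise (fun p q => ¬ p <:+ q ∧ ¬ q <:+ p) l) :
    List.Pairwise (fun p q => ¬ p <:+ q ∧ ¬ q <:+ p) (lyL l) := by
  rw [lyL, List.pairwise_map]
  refine List.Pairwise.imp_of_mem ?_ (h.filter _)
  intro a b ha hb hab
  rcases List.mem_filter.1 ha with ⟨ha', hal⟩
  rcases List.mem_filter.1 hb with ⟨hb', hbl⟩
  have hlast : lastD a = lastD b := by
    simp only [Bool.not_eq_true'] at hal hbl; rw [hal, hbl]
  constructor
  · intro hs; exact hab.1 (suffix_of_dropLast (hne a ha') (hne b hb') hlast hs)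
  · intro hs; exact hab.2 (suffix_of_dropLast (hne b hb') (hne a ha') hlast.symm hs)

lemma sum_split : ∀ (l : List (List Bool)), (∀ p ∈ l, p ≠ []) →
    ((lxL l).map List.length).sum + ((lyL l).map List.length).sum + l.length
      = (l.map List.length).sum := by
  intro l
  induction l with
  | nil => intro _; simp [lxL, lyL]
  | cons p l ih =>
    intro hne
    have hp : p ≠ [] := hne p (List.mem_cons_self)
    have hlen : 1 ≤ p.length := List.length_pos_iff.2 hp
    have ih' := ih (fun q hq => hne q (List.mem_cons_of_mem _ hq))
    cases hb : lastD p
    · rw [lxL_cons_neg hb, lyL_cons_pos hb]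
      simp only [List.map_cons, List.sum_cons, List.length_cons, List.length_dropLast]
      omega
    · rw [lxL_cons_pos hb, lyL_cons_neg hb]
      simp only [List.map_cons, List.sum_cons, List.length_cons, List.length_dropLast]
      omega

lemma paths_ne_nil : ∀ (φ : FSF), φ.paths ≠ []
  | .path p => by simp [FSF.paths]
  | .pair f g => by
      simp only [FSF.paths]
      exact fun h => paths_ne_nil f (List.append_eq_nil_iff.1 h).1



/-! ### structural strip lemma -/

lemma theta_true_cons (πL πR : H → H) (c : H → H → H) (ds : List Bool) (a b : H) :
    theta πL πR c (true :: ds) a b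
      = if false ∈ ds then
          (if true ∈ ds then c (πL a) (theta πL πR c ds (πR a) b) else c a b)
        else a := rfl

lemma theta_false_cons (πL πR : H → H) (c : H → H → H) (ds : List Bool) (a b : H) :
    theta πL πR c (false :: ds) a b
      = if true ∈ ds then
          (if false ∈ ds then c (πL b) (theta πL πR c ds a (πR b)) else c b a)
        else b := rfl

lemma strip_eq (πL πR : H → H) (c : H → H → H)
    (hcL : ∀ a b : H, πL (c a b) = a) (hcR : ∀ a b : H, πR (c a b) = b) :
    ∀ (l : List (List Bool)), l ≠ [] → (∀ p ∈ l, p ≠ []) → ∀ σ,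
    chainEval πL πR c l σ =
      if false ∈ dsL l then
        if true ∈ dsL l then
          theta πL πR c (dsL l) (chainEval πL πR c (lxL l) (πL σ))
            (chainEval πL πR c (lyL l) (πR σ))
        else chainEval πL πR c (lyL l) (πR σ)
      else chainEval πL πR c (lxL l) (πL σ) := by
  intro l
  induction l with
  | nil => intro h; exact absurd rfl h
  | cons p l ih =>
    intro _ hne σ
    have hp : p ≠ [] := hne p (List.mem_cons_self)
    cases l with
    | nil =>
      cases hb : lastD p
      · have hds : dsL [p] = [false] := by simp [dsL, hb]
        rw [hds, if_pos (by simp), if_neg (by simp)]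
        have hly : lyL [p] = [p.dropLast] := by
          rw [lyL_cons_pos hb]; simp [lyL]
        rw [hly]
        show pathEval πL πR p σ = pathEval πL πR p.dropLast (πR σ)
        rw [pathEval_strip πL πR p hp σ, hb]; rfl
      · have hds : dsL [p] = [true] := by simp [dsL, hb]
        rw [hds, if_neg (by simp)]
        have hlx : lxL [p] = [p.dropLast] := by
          rw [lxL_cons_pos hb]; simp [lxL]
        rw [hlx]
        show pathEval πL πR p σ = pathEval πL πR p.dropLast (πL σ)
        rw [pathEval_strip πL πR p hp σ, hb]; rfl
    | cons q r =>
      have hl'ne : (q :: r) ≠ [] := by simp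
      have hne' : ∀ x ∈ q :: r, x ≠ [] := fun x hx => hne x (List.mem_cons_of_mem _ hx)
      have ihl := ih hl'ne hne' σ
      rw [chainEval_cons πL πR c p hl'ne σ]
      have hds : dsL (p :: q :: r) = lastD p :: dsL (q :: r) := rfl
      cases hb : lastD p
      · -- p ends with R (false)
        have hstrip : pathEval πL πR p σ = pathEval πL πR p.dropLast (πR σ) := by
          rw [pathEval_strip πL πR p hp σ, hb]; rfl
        have hfmem : false ∈ dsL (p :: q :: r) := by
          rw [hds, hb]; exact List.mem_cons_self
        rw [if_pos hfmem, lxL_cons_neg hb, lyL_cons_pos hb]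
        by_cases hT : true ∈ dsL (q :: r)
        · have hTall : true ∈ dsL (p :: q :: r) := by
            rw [hds]; exact List.mem_cons_of_mem _ hT
          rw [if_pos hTall, hds, hb, theta_false_cons, if_pos hT]
          by_cases hF : false ∈ dsL (q :: r)
          · rw [if_pos hF]
            rw [if_pos hF, if_pos hT] at ihl
            rw [chainEval_cons πL πR c _ (mem_dsL_false hF) (πR σ), hcL, hcR,
              hstrip, ihl]
          · rw [if_neg hF] at ihl
            rw [if_neg hF, not_mem_dsL_false hF]
            show c (pathEval πL πR p σ) (chainEval πL πR c (q :: r) σ)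
              = c (pathEval πL πR p.dropLast (πR σ)) (chainEval πL πR c (lxL (q :: r)) (πL σ))
            rw [hstrip, ihl]
        · have hF : false ∈ dsL (q :: r) := by
            rcases dsL_mem_or hl'ne with h | h
            · exact absurd h hT
            · exact h
          have hTall : true ∉ dsL (p :: q :: r) := by
            rw [hds, hb]
            simp only [List.mem_cons]
            rintro (h | h)
            · exact Bool.noConfusion h
            · exact hT h
          rw [if_neg hTall]
          rw [if_pos hF, if_neg hT] at ihl
          rw [chainEval_cons πL πR c _ (mem_dsL_false hF) (πR σ), hstrip, ihl]
      · -- p ends with L (true)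
        have hstrip : pathEval πL πR p σ = pathEval πL πR p.dropLast (πL σ) := by
          rw [pathEval_strip πL πR p hp σ, hb]; rfl
        have hTall : true ∈ dsL (p :: q :: r) := by
          rw [hds, hb]; exact List.mem_cons_self
        rw [lxL_cons_pos hb, lyL_cons_neg hb]
        by_cases hF : false ∈ dsL (q :: r)
        · have hFall : false ∈ dsL (p :: q :: r) := by
            rw [hds]; exact List.mem_cons_of_mem _ hF
          rw [if_pos hFall, if_pos hTall, hds, hb, theta_true_cons, if_pos hF]
          by_cases hT : true ∈ dsL (q :: r)
          · rw [if_pos hT]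
            rw [if_pos hF, if_pos hT] at ihl
            rw [chainEval_cons πL πR c _ (mem_dsL_true hT) (πL σ), hcL, hcR,
              hstrip, ihl]
          · rw [if_neg hT]
            rw [if_pos hF, if_neg hT] at ihl
            rw [not_mem_dsL_true hT]
            show c (pathEval πL πR p σ) (chainEval πL πR c (q :: r) σ)
              = c (pathEval πL πR p.dropLast (πL σ)) (chainEval πL πR c (lyL (q :: r)) (πR σ))
            rw [hstrip, ihl]
        · have hFall : false ∉ dsL (p :: q :: r) := by
            rw [hds, hb]
            simp only [List.mem_cons]
            rintro (h | h)
            · exact Bool.noConfusion h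
            · exact hF h
          have hT : true ∈ dsL (q :: r) := by
            rcases dsL_mem_or hl'ne with h | h
            · exact h
            · exact absurd h hF
          rw [if_neg hFall]
          rw [if_neg hF] at ihl
          rw [chainEval_cons πL πR c _ (mem_dsL_true hT) (πL σ), hstrip, ihl]


/-! ### measurability -/

section Meas

set_option linter.unusedSectionVars false

variable [MeasurableSpace H]
variable {πL πR : H → H} {c : H → H → H}
variable (hπL : Measurable πL) (hπR : Measurable πR)
variable (hc : Measurable (fun x : H × H => c x.1 x.2))

include hπL hπR in
lemma measurable_proj (d : Bool) : Measurable (if d then πL else πR) := by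
  cases d
  · simpa using hπR
  · simpa using hπL

include hπL hπR in
lemma measurable_pathEval : ∀ p : List Bool, Measurable (pathEval πL πR p)
  | [] => measurable_id
  | (d :: p) => (measurable_proj hπL hπR d).comp (measurable_pathEval p)

include hc in
lemma measurable_c2 {α : Type*} [MeasurableSpace α] {f g : α → H}
    (hf : Measurable f) (hg : Measurable g) : Measurable fun x => c (f x) (g x) :=
  hc.comp (hf.prodMk hg)

include hπL hπR hc in
lemma measurable_chainEval : ∀ l : List (List Bool), Measurable (chainEval πL πR c l)
  | [] => measurable_id
  | [p] => measurable_pathEval hπL hπR p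
  | (p :: q :: r) =>
      measurable_c2 hc (measurable_pathEval hπL hπR p)
        (measurable_chainEval (q :: r))

include hπL hπR hc in
lemma measurable_takeP : ∀ k, Measurable (takeP πL πR c k)
  | 0 => measurable_id
  | 1 => hπL
  | (k+2) => measurable_c2 hc hπL ((measurable_takeP (k+1)).comp hπR)

include hπR in
lemma measurable_dropP : ∀ k, Measurable (dropP πR k)
  | 0 => measurable_id
  | (k+1) => (measurable_dropP k).comp hπR

include hπL hπR hc in
lemma measurable_psi : ∀ k, Measurable (fun x : H × H => psi πL πR c k x.1 x.2)
  | 0 => measurable_fst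
  | 1 => hc
  | (k+2) =>
      measurable_c2 hc (hπL.comp measurable_fst)
        ((measurable_psi (k+1)).comp
          ((hπR.comp measurable_fst).prodMk measurable_snd))

include hπL hπR hc in
lemma measurable_theta : ∀ ds : List Bool,
    Measurable (fun x : H × H => theta πL πR c ds x.1 x.2)
  | [] => measurable_fst
  | (true :: ds) => by
      by_cases hF : false ∈ ds
      · by_cases hT : true ∈ ds
        · simp only [theta, if_pos hF, if_pos hT]
          exact measurable_c2 hc (hπL.comp measurable_fst)
            ((measurable_theta ds).comp
              ((hπR.comp measurable_fst).prodMk measurable_snd))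
        · simp only [theta, if_pos hF, if_neg hT]
          exact hc
      · simp only [theta, if_neg hF]
        exact measurable_fst
  | (false :: ds) => by
      by_cases hT : true ∈ ds
      · by_cases hF : false ∈ ds
        · simp only [theta, if_pos hF, if_pos hT]
          exact measurable_c2 hc (hπL.comp measurable_snd)
            ((measurable_theta ds).comp
              (measurable_fst.prodMk (hπR.comp measurable_snd)))
        · simp only [theta, if_pos hT, if_neg hF]
          exact hc.comp (measurable_snd.prodMk measurable_fst)
      · simp only [theta, if_neg hT]
        exact measurable_snd

include hπL hπR hc in
lemma measurable_Phi : ∀ φ : FSF, Measurable (Phi πL πR c φ)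
  | .path _ => measurable_id
  | .pair f g =>
      measurable_c2 hc
        ((measurable_Phi f).comp (measurable_takeP hπL hπR hc f.paths.length))
        ((measurable_Phi g).comp (measurable_dropP hπR f.paths.length))

end Meas

/-! ### pure reassembly identities -/

section Pure

variable {πL πR : H → H} {c : H → H → H}
variable (hsurj : Function.Surjective (fun x : H × H => c x.1 x.2))
variable (hcL : ∀ a b : H, πL (c a b) = a) (hcR : ∀ a b : H, πR (c a b) = b)

include hsurj hcL hcR

lemma c_eta : ∀ σ : H, c (πL σ) (πR σ) = σ := by
  intro σ
  obtain ⟨⟨a, b⟩, rfl⟩ := hsurj σ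
  simp only [hcL, hcR]

lemma take_drop_psi : ∀ (k : ℕ) (a b : H),
    takeP πL πR c (k+1) (psi πL πR c (k+1) a b) = a ∧
    dropP πR (k+1) (psi πL πR c (k+1) a b) = b := by
  intro k
  induction k with
  | zero =>
    intro a b
    constructor
    · show πL (c a b) = a; exact hcL a b
    · show πR (c a b) = b; exact hcR a b
  | succ k ih =>
    intro a b
    constructor
    · show c (πL (psi πL πR c (k+2) a b)) (takeP πL πR c (k+1) (πR (psi πL πR c (k+2) a b))) = a
      show c (πL (c (πL a) (psi πL πR c (k+1) (πR a) b)))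
        (takeP πL πR c (k+1) (πR (c (πL a) (psi πL πR c (k+1) (πR a) b)))) = a
      rw [hcL, hcR, (ih (πR a) b).1]
      exact c_eta hsurj hcL hcR a
    · show dropP πR (k+1) (πR (c (πL a) (psi πL πR c (k+1) (πR a) b))) = b
      rw [hcR]
      exact (ih (πR a) b).2

lemma chain_append : ∀ (l₁ : List (List Bool)), l₁ ≠ [] →
    ∀ (l₂ : List (List Bool)), l₂ ≠ [] → ∀ σ : H,
    takeP πL πR c l₁.length (chainEval πL πR c (l₁ ++ l₂) σ) = chainEval πL πR c l₁ σ ∧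
    dropP πR l₁.length (chainEval πL πR c (l₁ ++ l₂) σ) = chainEval πL πR c l₂ σ := by
  intro l₁
  induction l₁ with
  | nil => intro h; exact absurd rfl h
  | cons p l₁ ih =>
    intro _ l₂ hl₂ σ
    cases l₁ with
    | nil =>
      have : (([p] : List (List Bool)) ++ l₂) = p :: l₂ := rfl
      rw [this, chainEval_cons πL πR c p hl₂ σ]
      constructor
      · show πL _ = _; rw [hcL]; rfl
      · show dropP πR 0 (πR _) = _; rw [hcR]; rfl
    | cons q r =>
      have hqr : (q :: r) ≠ [] := by simp
      have hcons : chainEval πL πR c ((p :: q :: r) ++ l₂) σ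
          = c (pathEval πL πR p σ) (chainEval πL πR c ((q :: r) ++ l₂) σ) := by
        exact chainEval_cons πL πR c p (by simp) σ
      have ih' := ih hqr l₂ hl₂ σ
      constructor
      · show c (πL (chainEval πL πR c ((p :: q :: r) ++ l₂) σ))
            (takeP πL πR c (r.length + 1) (πR (chainEval πL πR c ((p :: q :: r) ++ l₂) σ)))
          = chainEval πL πR c (p :: q :: r) σ
        rw [hcons, hcL, hcR]
        rw [show takeP πL πR c (r.length + 1) (chainEval πL πR c ((q :: r) ++ l₂) σ)
            = chainEval πL πR c (q :: r) σ from ih'.1]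
        exact (chainEval_cons πL πR c p hqr σ).symm
      · show dropP πR (r.length + 1) (πR (chainEval πL πR c ((p :: q :: r) ++ l₂) σ))
          = chainEval πL πR c l₂ σ
        rw [hcons, hcR]
        exact ih'.2

lemma eval_phi : ∀ (φ : FSF) (σ : H),
    FSF.eval πL πR c φ σ = Phi πL πR c φ (chainEval πL πR c φ.paths σ) := by
  intro φ
  induction φ with
  | path p => intro σ; rfl
  | pair f g ihf ihg =>
    intro σ
    have h := chain_append (πL := πL) (πR := πR) (c := c) hsurj hcL hcR
      f.paths (paths_ne_nil f) g.paths (paths_ne_nil g) σ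
    show c (FSF.eval πL πR c f σ) (FSF.eval πL πR c g σ)
      = c (Phi πL πR c f (takeP πL πR c f.paths.length (chainEval πL πR c (f.paths ++ g.paths) σ)))
          (Phi πL πR c g (dropP πR f.paths.length (chainEval πL πR c (f.paths ++ g.paths) σ)))
    rw [h.1, h.2, ihf σ, ihg σ]

end Pure


/-! ### integration lemmas -/

section Integration

set_option linter.unusedSectionVars false

variable [MeasurableSpace H] {μ : Measure H} [IsProbabilityMeasure μ]
variable {πL πR : H → H} {c : H → H → H}
variable (hπL : Measurable πL) (hπR : Measurable πR)
variable (hc : Measurable (fun x : H × H => c x.1 x.2))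
variable (hsurj : Function.Surjective (fun x : H × H => c x.1 x.2))
variable (hcL : ∀ a b : H, πL (c a b) = a) (hcR : ∀ a b : H, πR (c a b) = b)
variable (hsplit : ∀ g : H × H → ENNReal, Measurable g →
      ∫⁻ σ, g (πL σ, πR σ) ∂μ = ∫⁻ σ₁, ∫⁻ σ₂, g (σ₁, σ₂) ∂μ ∂μ)

lemma lint_swap (F : H → H → ENNReal) (hF : Measurable fun q : H × H => F q.1 q.2) :
    ∫⁻ a, ∫⁻ b, F a b ∂μ ∂μ = ∫⁻ b, ∫⁻ a, F a b ∂μ ∂μ :=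
  lintegral_lintegral_swap hF.aemeasurable

lemma lint_rot (F : H → H → H → ENNReal)
    (hF : Measurable fun q : (H × H) × H => F q.1.1 q.1.2 q.2) :
    ∫⁻ b, ∫⁻ x, ∫⁻ y, F b x y ∂μ ∂μ ∂μ = ∫⁻ x, ∫⁻ y, ∫⁻ b, F b x y ∂μ ∂μ ∂μ := by
  have h1 : Measurable fun q : H × H => ∫⁻ y, F q.1 q.2 y ∂μ :=
    hF.lintegral_prod_right'
  rw [lint_swap (fun b x => ∫⁻ y, F b x y ∂μ) h1]
  refine lintegral_congr fun x => ?_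
  exact lint_swap (fun b y => F b x y)
    (hF.comp ((measurable_fst.prodMk measurable_const).prodMk measurable_snd))

include hπL hπR hc hsurj hcL hcR hsplit

lemma int_c (g : H → ENNReal) (hg : Measurable g) :
    ∫⁻ a, ∫⁻ b, g (c a b) ∂μ ∂μ = ∫⁻ σ, g σ ∂μ := by
  have h := hsplit (fun x => g (c x.1 x.2)) (hg.comp hc)
  rw [← h]
  exact lintegral_congr fun σ => congrArg g (c_eta hsurj hcL hcR σ)

lemma int_projL (g : H → ENNReal) (hg : Measurable g) :
    ∫⁻ σ, g (πL σ) ∂μ = ∫⁻ σ, g σ ∂μ := by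
  have h : ∫⁻ σ, g (πL σ) ∂μ = ∫⁻ σ₁, ∫⁻ σ₂, g σ₁ ∂μ ∂μ :=
    hsplit (fun x => g x.1) (hg.comp measurable_fst)
  rw [h]
  refine (lintegral_congr fun σ₁ => ?_)
  rw [lintegral_const, measure_univ, mul_one]

lemma int_projR (g : H → ENNReal) (hg : Measurable g) :
    ∫⁻ σ, g (πR σ) ∂μ = ∫⁻ σ, g σ ∂μ := by
  have h : ∫⁻ σ, g (πR σ) ∂μ = ∫⁻ σ₁, ∫⁻ σ₂, g σ₂ ∂μ ∂μ :=
    hsplit (fun x => g x.2) (hg.comp measurable_snd)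
  rw [h, lintegral_const, measure_univ, mul_one]

lemma int_path : ∀ (p : List Bool) (g : H → ENNReal), Measurable g →
    ∫⁻ σ, g (pathEval πL πR p σ) ∂μ = ∫⁻ σ, g σ ∂μ := by
  intro p
  induction p with
  | nil => intro g hg; rfl
  | cons d p ih =>
    intro g hg
    have h1 := ih (fun σ => g ((if d then πL else πR) σ))
      (hg.comp (measurable_proj hπL hπR d))
    refine h1.trans ?_
    cases d
    · exact int_projR hπL hπR hc hsurj hcL hcR hsplit g hg
    · exact int_projL hπL hπR hc hsurj hcL hcR hsplit g hg

lemma int_psi : ∀ (k : ℕ) (g : H → ENNReal), Measurable g →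
    ∫⁻ a, ∫⁻ b, g (psi πL πR c (k+1) a b) ∂μ ∂μ = ∫⁻ σ, g σ ∂μ := by
  intro k
  induction k with
  | zero =>
    intro g hg
    exact int_c hπL hπR hc hsurj hcL hcR hsplit g hg
  | succ k ih =>
    intro g hg
    have m_psi := measurable_psi hπL hπR hc (k+1)
    show ∫⁻ a, ∫⁻ b, g (c (πL a) (psi πL πR c (k+1) (πR a) b)) ∂μ ∂μ = _
    have mF : Measurable fun q : H × H => g (c (πL q.1) (psi πL πR c (k+1) (πR q.1) q.2)) :=
      hg.comp (measurable_c2 hc (hπL.comp measurable_fst)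
        (m_psi.comp ((hπR.comp measurable_fst).prodMk measurable_snd)))
    rw [lint_swap _ mF]
    have step : ∀ b, ∫⁻ a, g (c (πL a) (psi πL πR c (k+1) (πR a) b)) ∂μ
        = ∫⁻ x, ∫⁻ y, g (c x (psi πL πR c (k+1) y b)) ∂μ ∂μ := fun b =>
      hsplit (fun q => g (c q.1 (psi πL πR c (k+1) q.2 b)))
        (hg.comp (measurable_c2 hc measurable_fst
          (m_psi.comp (measurable_snd.prodMk measurable_const))))
    rw [lintegral_congr step]
    rw [lint_rot (fun b x y => g (c x (psi πL πR c (k+1) y b)))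
      (hg.comp (measurable_c2 hc (measurable_snd.comp measurable_fst)
        (m_psi.comp (measurable_snd.prodMk (measurable_fst.comp measurable_fst)))))]
    have h2 : ∀ x, ∫⁻ y, ∫⁻ b, g (c x (psi πL πR c (k+1) y b)) ∂μ ∂μ
        = ∫⁻ z, g (c x z) ∂μ := fun x =>
      ih (fun z => g (c x z)) (hg.comp (measurable_c2 hc measurable_const measurable_id))
    rw [lintegral_congr h2]
    exact int_c hπL hπR hc hsurj hcL hcR hsplit g hg



include hπL hπR hc hsurj hcL hcR hsplit in
lemma int_theta : ∀ (ds : List Bool), true ∈ ds → false ∈ ds →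
    ∀ g : H → ENNReal, Measurable g →
    ∫⁻ a, ∫⁻ b, g (theta πL πR c ds a b) ∂μ ∂μ = ∫⁻ σ, g σ ∂μ := by
  intro ds
  induction ds with
  | nil => intro h; simp at h
  | cons d ds ih =>
    intro hT hF g hg
    have m_th := measurable_theta hπL hπR hc ds
    cases d
    · -- d = false
      have hT' : true ∈ ds := by simpa using hT
      by_cases hF' : false ∈ ds
      · have hth : ∀ a b : H, theta πL πR c (false :: ds) a b
            = c (πL b) (theta πL πR c ds a (πR b)) := by
          intro a b; rw [theta_false_cons, if_pos hT', if_pos hF']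
        simp only [hth]
        have step : ∀ a, ∫⁻ b, g (c (πL b) (theta πL πR c ds a (πR b))) ∂μ
            = ∫⁻ x, ∫⁻ y, g (c x (theta πL πR c ds a y)) ∂μ ∂μ := fun a =>
          hsplit (fun q => g (c q.1 (theta πL πR c ds a q.2)))
            (hg.comp (measurable_c2 hc measurable_fst
              (m_th.comp (measurable_const.prodMk measurable_snd))))
        rw [lintegral_congr step]
        rw [lint_rot (fun a x y => g (c x (theta πL πR c ds a y)))
          (hg.comp (measurable_c2 hc (measurable_snd.comp measurable_fst)
            (m_th.comp ((measurable_fst.comp measurable_fst).prodMk measurable_snd))))]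
        refine (lintegral_congr fun x => ?_).trans
          (int_c hπL hπR hc hsurj hcL hcR hsplit g hg)
        rw [lint_swap (fun y a => g (c x (theta πL πR c ds a y)))
          (hg.comp (measurable_c2 hc measurable_const
            (m_th.comp (measurable_snd.prodMk measurable_fst))))]
        exact ih hT' hF' (fun z => g (c x z))
          (hg.comp (measurable_c2 hc measurable_const measurable_id))
      · have hth : ∀ a b : H, theta πL πR c (false :: ds) a b = c b a := by
          intro a b; rw [theta_false_cons, if_pos hT', if_neg hF']
        simp only [hth]
        rw [lint_swap (fun a b => g (c b a))
          (hg.comp (measurable_c2 hc measurable_snd measurable_fst))]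
        exact int_c hπL hπR hc hsurj hcL hcR hsplit g hg
    · -- d = true
      have hF' : false ∈ ds := by simpa using hF
      by_cases hT' : true ∈ ds
      · have hth : ∀ a b : H, theta πL πR c (true :: ds) a b
            = c (πL a) (theta πL πR c ds (πR a) b) := by
          intro a b; rw [theta_true_cons, if_pos hF', if_pos hT']
        simp only [hth]
        have mF : Measurable fun q : H × H =>
            g (c (πL q.1) (theta πL πR c ds (πR q.1) q.2)) :=
          hg.comp (measurable_c2 hc (hπL.comp measurable_fst)
            (m_th.comp ((hπR.comp measurable_fst).prodMk measurable_snd)))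
        rw [lint_swap _ mF]
        have step : ∀ b, ∫⁻ a, g (c (πL a) (theta πL πR c ds (πR a) b)) ∂μ
            = ∫⁻ x, ∫⁻ y, g (c x (theta πL πR c ds y b)) ∂μ ∂μ := fun b =>
          hsplit (fun q => g (c q.1 (theta πL πR c ds q.2 b)))
            (hg.comp (measurable_c2 hc measurable_fst
              (m_th.comp (measurable_snd.prodMk measurable_const))))
        rw [lintegral_congr step]
        rw [lint_rot (fun b x y => g (c x (theta πL πR c ds y b)))
          (hg.comp (measurable_c2 hc (measurable_snd.comp measurable_fst)
            (m_th.comp (measurable_snd.prodMk (measurable_fst.comp measurable_fst)))))]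
        refine (lintegral_congr fun x => ?_).trans
          (int_c hπL hπR hc hsurj hcL hcR hsplit g hg)
        exact ih hT' hF' (fun z => g (c x z))
          (hg.comp (measurable_c2 hc measurable_const measurable_id))
      · have hth : ∀ a b : H, theta πL πR c (true :: ds) a b = c a b := by
          intro a b; rw [theta_true_cons, if_pos hF', if_neg hT']
        simp only [hth]
        exact int_c hπL hπR hc hsurj hcL hcR hsplit g hg

include hπL hπR hc hsurj hcL hcR hsplit in
lemma int_takedrop (k : ℕ) (h : H × H → ENNReal) (hh : Measurable h) :
    ∫⁻ v, h (takeP πL πR c (k+1) v, dropP πR (k+1) v) ∂μ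
      = ∫⁻ a, ∫⁻ b, h (a, b) ∂μ ∂μ := by
  have hG : Measurable fun v => h (takeP πL πR c (k+1) v, dropP πR (k+1) v) :=
    hh.comp ((measurable_takeP hπL hπR hc (k+1)).prodMk (measurable_dropP hπR (k+1)))
  have h1 := int_psi hπL hπR hc hsurj hcL hcR hsplit k
    (fun v => h (takeP πL πR c (k+1) v, dropP πR (k+1) v)) hG
  rw [← h1]
  refine lintegral_congr fun a => lintegral_congr fun b => ?_
  show h (takeP πL πR c (k+1) (psi πL πR c (k+1) a b),
      dropP πR (k+1) (psi πL πR c (k+1) a b)) = h (a, b)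
  rw [(take_drop_psi hsurj hcL hcR k a b).1, (take_drop_psi hsurj hcL hcR k a b).2]

include hπL hπR hc hsurj hcL hcR hsplit in
lemma int_phi : ∀ (φ : FSF) (g : H → ENNReal), Measurable g →
    ∫⁻ v, g (Phi πL πR c φ v) ∂μ = ∫⁻ σ, g σ ∂μ := by
  intro φ
  induction φ with
  | path p => intro g hg; rfl
  | pair f f' ihf ihg =>
    intro g hg
    obtain ⟨m, hm⟩ : ∃ m, f.paths.length = m + 1 := by
      cases hP : f.paths with
      | nil => exact absurd hP (paths_ne_nil f)
      | cons x xs => exact ⟨xs.length, by simp⟩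
    have mPf := measurable_Phi hπL hπR hc f
    have mPg := measurable_Phi hπL hπR hc f'
    show ∫⁻ v, g (c (Phi πL πR c f (takeP πL πR c f.paths.length v))
        (Phi πL πR c f' (dropP πR f.paths.length v))) ∂μ = _
    rw [hm]
    have h2 : ∫⁻ v, g (c (Phi πL πR c f (takeP πL πR c (m+1) v))
          (Phi πL πR c f' (dropP πR (m+1) v))) ∂μ
        = ∫⁻ a, ∫⁻ b, g (c (Phi πL πR c f a) (Phi πL πR c f' b)) ∂μ ∂μ :=
      int_takedrop hπL hπR hc hsurj hcL hcR hsplit m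
        (fun x : H × H => g (c (Phi πL πR c f x.1) (Phi πL πR c f' x.2)))
        (hg.comp (measurable_c2 hc (mPf.comp measurable_fst) (mPg.comp measurable_snd)))
    rw [h2]
    rw [lint_swap (fun a b => g (c (Phi πL πR c f a) (Phi πL πR c f' b)))
      (hg.comp (measurable_c2 hc (mPf.comp measurable_fst) (mPg.comp measurable_snd)))]
    have h3 : ∀ b, ∫⁻ a, g (c (Phi πL πR c f a) (Phi πL πR c f' b)) ∂μ
        = ∫⁻ x, g (c x (Phi πL πR c f' b)) ∂μ := fun b =>
      ihf (fun x => g (c x (Phi πL πR c f' b)))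
        (hg.comp (measurable_c2 hc measurable_id measurable_const))
    rw [lintegral_congr h3]
    rw [lint_swap (fun b x => g (c x (Phi πL πR c f' b)))
      (hg.comp (measurable_c2 hc measurable_snd (mPg.comp measurable_fst)))]
    have h4 : ∀ x, ∫⁻ b, g (c x (Phi πL πR c f' b)) ∂μ = ∫⁻ y, g (c x y) ∂μ := fun x =>
      ihg (fun y => g (c x y))
        (hg.comp (measurable_c2 hc measurable_const measurable_id))
    rw [lintegral_congr h4]
    exact int_c hπL hπR hc hsurj hcL hcR hsplit g hg

include hπL hπR hc hsurj hcL hcR hsplit in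
lemma int_chain : ∀ (N : ℕ) (l : List (List Bool)),
    (l.map List.length).sum ≤ N → l ≠ [] →
    List.Pairwise (fun p q => ¬ p <:+ q ∧ ¬ q <:+ p) l →
    ∀ g : H → ENNReal, Measurable g →
    ∫⁻ σ, g (chainEval πL πR c l σ) ∂μ = ∫⁻ σ, g σ ∂μ := by
  intro N
  induction N with
  | zero =>
    intro l hsum hne hpw g hg
    rcases l with _ | ⟨p, _ | ⟨q, r⟩⟩
    · exact absurd rfl hne
    · exact int_path hπL hπR hc hsurj hcL hcR hsplit p g hg
    · exfalso
      have hp : p ≠ [] := all_ne_nil hpw p (List.mem_cons_self)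
      have h1 : 1 ≤ p.length := List.length_pos_iff.2 hp
      simp only [List.map_cons, List.sum_cons, Nat.le_zero] at hsum
      omega
  | succ N ih =>
    intro l hsum hne hpw g hg
    rcases l with _ | ⟨p, _ | ⟨q, r⟩⟩
    · exact absurd rfl hne
    · exact int_path hπL hπR hc hsurj hcL hcR hsplit p g hg
    · have hnn : ∀ x ∈ p :: q :: r, x ≠ [] := all_ne_nil hpw
      have hstrip := strip_eq πL πR c hcL hcR (p :: q :: r) (by simp) hnn
      have hss := sum_split (p :: q :: r) hnn
      have hlen2 : 2 ≤ (p :: q :: r).length := by simp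
      have hSx : ((lxL (p :: q :: r)).map List.length).sum ≤ N := by omega
      have hSy : ((lyL (p :: q :: r)).map List.length).sum ≤ N := by omega
      have mA := measurable_chainEval hπL hπR hc (lxL (p :: q :: r))
      have mB := measurable_chainEval hπL hπR hc (lyL (p :: q :: r))
      have m_th := measurable_theta hπL hπR hc (dsL (p :: q :: r))
      by_cases hF : false ∈ dsL (p :: q :: r)
      · by_cases hT : true ∈ dsL (p :: q :: r)
        · have hstrip' : ∀ σ, chainEval πL πR c (p :: q :: r) σ
              = theta πL πR c (dsL (p :: q :: r))
                  (chainEval πL πR c (lxL (p :: q :: r)) (πL σ))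
                  (chainEval πL πR c (lyL (p :: q :: r)) (πR σ)) := fun σ => by
            rw [hstrip σ, if_pos hF, if_pos hT]
          rw [lintegral_congr fun σ => congrArg g (hstrip' σ)]
          have h1 : ∫⁻ σ, g (theta πL πR c (dsL (p :: q :: r))
                (chainEval πL πR c (lxL (p :: q :: r)) (πL σ))
                (chainEval πL πR c (lyL (p :: q :: r)) (πR σ))) ∂μ
              = ∫⁻ x, ∫⁻ y, g (theta πL πR c (dsL (p :: q :: r))
                (chainEval πL πR c (lxL (p :: q :: r)) x)
                (chainEval πL πR c (lyL (p :: q :: r)) y)) ∂μ ∂μ :=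
            hsplit (fun x : H × H => g (theta πL πR c (dsL (p :: q :: r))
                (chainEval πL πR c (lxL (p :: q :: r)) x.1)
                (chainEval πL πR c (lyL (p :: q :: r)) x.2)))
              (hg.comp (m_th.comp ((mA.comp measurable_fst).prodMk
                (mB.comp measurable_snd))))
          rw [h1]
          have h2 : ∀ x, ∫⁻ y, g (theta πL πR c (dsL (p :: q :: r))
                (chainEval πL πR c (lxL (p :: q :: r)) x)
                (chainEval πL πR c (lyL (p :: q :: r)) y)) ∂μ
              = ∫⁻ b, g (theta πL πR c (dsL (p :: q :: r))
                (chainEval πL πR c (lxL (p :: q :: r)) x) b) ∂μ := fun x =>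
            ih (lyL (p :: q :: r)) hSy (mem_dsL_false hF) (pairwise_lyL hnn hpw)
              (fun b => g (theta πL πR c (dsL (p :: q :: r))
                (chainEval πL πR c (lxL (p :: q :: r)) x) b))
              (hg.comp (m_th.comp (measurable_const.prodMk measurable_id)))
          rw [lintegral_congr h2]
          rw [lint_swap (fun x b => g (theta πL πR c (dsL (p :: q :: r))
              (chainEval πL πR c (lxL (p :: q :: r)) x) b))
            (hg.comp (m_th.comp ((mA.comp measurable_fst).prodMk measurable_snd)))]
          have h3 : ∀ b, ∫⁻ x, g (theta πL πR c (dsL (p :: q :: r))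
                (chainEval πL πR c (lxL (p :: q :: r)) x) b) ∂μ
              = ∫⁻ a, g (theta πL πR c (dsL (p :: q :: r)) a b) ∂μ := fun b =>
            ih (lxL (p :: q :: r)) hSx (mem_dsL_true hT) (pairwise_lxL hnn hpw)
              (fun a => g (theta πL πR c (dsL (p :: q :: r)) a b))
              (hg.comp (m_th.comp (measurable_id.prodMk measurable_const)))
          rw [lintegral_congr h3]
          rw [lint_swap (fun b a => g (theta πL πR c (dsL (p :: q :: r)) a b))
            (hg.comp (m_th.comp (measurable_snd.prodMk measurable_fst)))]
          exact int_theta hπL hπR hc hsurj hcL hcR hsplit (dsL (p :: q :: r)) hT hF g hg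
        · have hstrip' : ∀ σ, chainEval πL πR c (p :: q :: r) σ
              = chainEval πL πR c (lyL (p :: q :: r)) (πR σ) := fun σ => by
            rw [hstrip σ, if_pos hF, if_neg hT]
          rw [lintegral_congr fun σ => congrArg g (hstrip' σ)]
          rw [int_projR hπL hπR hc hsurj hcL hcR hsplit
            (fun σ => g (chainEval πL πR c (lyL (p :: q :: r)) σ)) (hg.comp mB)]
          exact ih (lyL (p :: q :: r)) hSy (mem_dsL_false hF) (pairwise_lyL hnn hpw) g hg
      · have hT : true ∈ dsL (p :: q :: r) := by
          rcases dsL_mem_or (l := p :: q :: r) (by simp) with h | h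
          · exact h
          · exact absurd h hF
        have hstrip' : ∀ σ, chainEval πL πR c (p :: q :: r) σ
            = chainEval πL πR c (lxL (p :: q :: r)) (πL σ) := fun σ => by
          rw [hstrip σ, if_neg hF]
        rw [lintegral_congr fun σ => congrArg g (hstrip' σ)]
        rw [int_projL hπL hπR hc hsurj hcL hcR hsplit
          (fun σ => g (chainEval πL πR c (lxL (p :: q :: r)) σ)) (hg.comp mA)]
        exact ih (lxL (p :: q :: r)) hSx (mem_dsL_true hT) (pairwise_lxL hnn hpw) g hg

end Integration

theorem nonduplicating_fsf_measure_preserving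
    [MeasurableSpace H] (μ : Measure H) [IsProbabilityMeasure μ]
    (πL πR : H → H) (hπL : Measurable πL) (hπR : Measurable πR)
    (c : H → H → H) (hc : Measurable (fun x : H × H => c x.1 x.2))
    (hsurj : Function.Surjective (fun x : H × H => c x.1 x.2))
    (hcL : ∀ a b : H, πL (c a b) = a) (hcR : ∀ a b : H, πR (c a b) = b)
    (hsplit : ∀ g : H × H → ENNReal, Measurable g →
      ∫⁻ σ, g (πL σ, πR σ) ∂μ = ∫⁻ σ₁, ∫⁻ σ₂, g (σ₁, σ₂) ∂μ ∂μ)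
    (φ : FSF) (hφ : φ.NonDuplicating) :
    ∀ g : H → ENNReal, Measurable g →
      ∫⁻ σ, g (φ.eval πL πR c σ) ∂μ = ∫⁻ σ, g σ ∂μ := by
  intro g hg
  rw [lintegral_congr fun σ => congrArg g (eval_phi hsurj hcL hcR φ σ)]
  have h2 := int_chain hπL hπR hc hsurj hcL hcR hsplit
    ((φ.paths.map List.length).sum) φ.paths le_rfl (paths_ne_nil φ) hφ
    (fun v => g (Phi πL πR c φ v)) (hg.comp (measurable_Phi hπL hπR hc φ))
  exact h2.trans (int_phi hπL hπR hc hsurj hcL hcR hsplit φ g hg)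


end EntropyShuffle
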